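/- Let μ > 0, s ∈ ℝ, l(s) = (max{0, 1−s})² be the squared margin loss and U_μ(s) = 1/(1+μ|s|). Define l̃_μ(s) = −(2/μ)(1/μ − 1)·log(1−μs) − (2/μ)s + C for s ≤ 0, l̃_μ(s) = −(2/μ)(1/μ + 1)·log(1+μs) + (2/μ)s + C for 0 < s < 1, and l̃_μ(s) = 0 for s ≥ 1, where C = (2/μ)(1/μ + 1)·log(1+μ) − 2/μ. Then l̃_μ is continuous on ℝ and l̃_μ'(s) = U_μ(s)·l'(s) for all s ∉ {0, 1}. -/

import Mathlib

/-- Equivalent loss of the squared margin loss under the margin-based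
uncertainty `U_μ(s) = 1/(1+μ|s|)`. -/
noncomputable def ltilSqHinge (μ : ℝ) (s : ℝ) : ℝ :=
  if s ≤ 0 then
    -((2/μ) * (1/μ - 1) * Real.log (1 - μ * s)) - (2/μ) * s
      + ((2/μ) * (1/μ + 1) * Real.log (1 + μ) - 2/μ)
  else if s < 1 then
    -((2/μ) * (1/μ + 1) * Real.log (1 + μ * s)) + (2/μ) * s
      + ((2/μ) * (1/μ + 1) * Real.log (1 + μ) - 2/μ)
  else 0

open Real Filter Set

noncomputable def Abr (μ s : ℝ) : ℝ :=
  -((2/μ) * (1/μ - 1) * Real.log (1 - μ * s)) - (2/μ) * s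
      + ((2/μ) * (1/μ + 1) * Real.log (1 + μ) - 2/μ)

noncomputable def Bbr (μ s : ℝ) : ℝ :=
  -((2/μ) * (1/μ + 1) * Real.log (1 + μ * s)) + (2/μ) * s
      + ((2/μ) * (1/μ + 1) * Real.log (1 + μ) - 2/μ)

lemma Abr_zero (μ : ℝ) : Abr μ 0 = Bbr μ 0 := by
  simp [Abr, Bbr]

lemma Bbr_one (μ : ℝ) : Bbr μ 1 = 0 := by
  simp [Bbr]

lemma ltil_of_le (μ s : ℝ) (h : s ≤ 0) : ltilSqHinge μ s = Abr μ s := by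
  simp [ltilSqHinge, Abr, h]

lemma ltil_of_mid (μ s : ℝ) (h0 : 0 < s) (h1 : s < 1) : ltilSqHinge μ s = Bbr μ s := by
  simp [ltilSqHinge, Bbr, not_le.mpr h0, h0.not_ge, h1]

lemma ltil_of_ge (μ s : ℝ) (h : 1 ≤ s) : ltilSqHinge μ s = 0 := by
  have h0 : ¬ s ≤ 0 := by linarith
  have h1 : ¬ s < 1 := not_lt.mpr h
  simp [ltilSqHinge, h0, h1]

lemma hasDerivAt_Abr (μ : ℝ) (hμ : 0 < μ) (s : ℝ) (hs : 1 - μ * s ≠ 0) :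
    HasDerivAt (Abr μ) (2*(s-1)/(1 - μ*s)) s := by
  have hg : HasDerivAt (fun t : ℝ => 1 - μ * t) (-μ) s := by
    simpa using ((hasDerivAt_id s).const_mul μ).const_sub 1
  have hlog : HasDerivAt (fun t : ℝ => Real.log (1 - μ * t)) (-μ / (1 - μ*s)) s :=
    hg.log hs
  have h := (((hlog.const_mul ((2/μ) * (1/μ - 1))).neg.sub
      ((hasDerivAt_id s).const_mul (2/μ))).add_const
      ((2/μ) * (1/μ + 1) * Real.log (1 + μ) - 2/μ))
  simp only [id_eq, mul_one] at h
  unfold Abr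
  refine h.congr_deriv ?_
  field_simp [hμ.ne']
  ring

lemma hasDerivAt_Bbr (μ : ℝ) (hμ : 0 < μ) (s : ℝ) (hs : 1 + μ * s ≠ 0) :
    HasDerivAt (Bbr μ) (2*(s-1)/(1 + μ*s)) s := by
  have hg : HasDerivAt (fun t : ℝ => 1 + μ * t) (μ) s := by
    simpa using ((hasDerivAt_id s).const_mul μ).const_add 1
  have hlog : HasDerivAt (fun t : ℝ => Real.log (1 + μ * t)) (μ / (1 + μ*s)) s :=
    hg.log hs
  have h := (((hlog.const_mul ((2/μ) * (1/μ + 1))).neg.add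
      ((hasDerivAt_id s).const_mul (2/μ))).add_const
      ((2/μ) * (1/μ + 1) * Real.log (1 + μ) - 2/μ))
  simp only [id_eq, mul_one] at h
  unfold Bbr
  refine h.congr_deriv ?_
  field_simp [hμ.ne']
  ring

lemma sqloss_deriv_lt (s : ℝ) (hs : s < 1) :
    deriv (fun s : ℝ => (max 0 (1 - s))^2) s = 2*(s-1) := by
  have hev : (fun t : ℝ => (max 0 (1 - t))^2) =ᶠ[nhds s] (fun t => (1-t)^2) := by
    filter_upwards [Iio_mem_nhds hs] with t ht
    rw [max_eq_right (by simp at ht ⊢; linarith : (0:ℝ) ≤ 1 - t)]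
  rw [hev.deriv_eq]
  have h1 : HasDerivAt (fun t : ℝ => 1 - t) (-1) s := by
    simpa using (hasDerivAt_id s).const_sub 1
  have h2 := h1.pow 2
  rw [show (fun t : ℝ => (1 - t)^2) = (fun t : ℝ => 1 - t)^2 from rfl, h2.deriv]
  push_cast
  ring

lemma sqloss_deriv_gt (s : ℝ) (hs : 1 < s) :
    deriv (fun s : ℝ => (max 0 (1 - s))^2) s = 0 := by
  have hev : (fun t : ℝ => (max 0 (1 - t))^2) =ᶠ[nhds s] (fun _ => (0:ℝ)) := by
    filter_upwards [Ioi_mem_nhds hs] with t ht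
    rw [max_eq_left (by simp at ht ⊢; linarith : 1 - t ≤ (0:ℝ))]
    norm_num
  rw [hev.deriv_eq, deriv_const]

theorem stmt3 (μ : ℝ) (hμ : 0 < μ) :
    Continuous (ltilSqHinge μ) ∧
    ∀ s : ℝ, s ≠ 0 → s ≠ 1 →
      deriv (ltilSqHinge μ) s
        = (1 / (1 + μ * |s|)) * deriv (fun s : ℝ => (max 0 (1 - s))^2) s := by
  constructor
  · rw [continuous_iff_continuousAt]
    intro s
    have hcontA : ∀ t : ℝ, 1 - μ * t ≠ 0 → ContinuousAt (Abr μ) t :=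
      fun t ht => (hasDerivAt_Abr μ hμ t ht).continuousAt
    have hcontB : ∀ t : ℝ, 1 + μ * t ≠ 0 → ContinuousAt (Bbr μ) t :=
      fun t ht => (hasDerivAt_Bbr μ hμ t ht).continuousAt
    rcases lt_trichotomy s 0 with h | h | h
    · refine (hcontA s (by nlinarith)).congr ?_
      filter_upwards [Iio_mem_nhds h] with t ht
      exact (ltil_of_le μ t ht.le).symm
    · subst h
      rw [ContinuousAt, ← nhdsLE_sup_nhdsGE, tendsto_sup]
      constructor
      · show ContinuousWithinAt (ltilSqHinge μ) (Iic (0:ℝ)) 0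
        refine ((hcontA 0 (by norm_num)).continuousWithinAt).congr
          (fun t ht => ltil_of_le μ t ht) (ltil_of_le μ 0 le_rfl)
      · show ContinuousWithinAt (ltilSqHinge μ) (Ici (0:ℝ)) 0
        refine ((hcontB 0 (by norm_num)).continuousWithinAt).congr_of_eventuallyEq
          ?_ (by rw [ltil_of_le μ 0 le_rfl, Abr_zero])
        filter_upwards [mem_nhdsWithin_of_mem_nhds (Iio_mem_nhds one_pos),
          self_mem_nhdsWithin] with t ht1 ht2
        rcases eq_or_lt_of_le (mem_Ici.mp ht2) with h0 | h0
        · rw [← h0, ltil_of_le μ 0 le_rfl, Abr_zero]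
        · exact ltil_of_mid μ t h0 ht1
    · rcases lt_trichotomy s 1 with h1 | h1 | h1
      · refine (hcontB s (by nlinarith)).congr ?_
        filter_upwards [Ioo_mem_nhds h h1] with t ht
        exact (ltil_of_mid μ t ht.1 ht.2).symm
      · subst h1
        rw [ContinuousAt, ← nhdsLE_sup_nhdsGE, tendsto_sup]
        constructor
        · show ContinuousWithinAt (ltilSqHinge μ) (Iic (1:ℝ)) 1
          refine ((hcontB 1 (by nlinarith)).continuousWithinAt).congr_of_eventuallyEq
            ?_ (by rw [ltil_of_ge μ 1 le_rfl, Bbr_one])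
          filter_upwards [mem_nhdsWithin_of_mem_nhds (Ioi_mem_nhds one_pos),
            self_mem_nhdsWithin] with t ht1 ht2
          rcases eq_or_lt_of_le (mem_Iic.mp ht2) with h0 | h0
          · rw [h0, ltil_of_ge μ 1 le_rfl, Bbr_one]
          · exact ltil_of_mid μ t ht1 h0
        · show ContinuousWithinAt (ltilSqHinge μ) (Ici (1:ℝ)) 1
          refine ContinuousWithinAt.congr (f := fun _ : ℝ => (0:ℝ))
            continuousWithinAt_const (fun t ht => ltil_of_ge μ t ht) (ltil_of_ge μ 1 le_rfl)
      · refine (continuousAt_const (y := (0:ℝ))).congr ?_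
        filter_upwards [Ioi_mem_nhds h1] with t ht
        exact (ltil_of_ge μ t ht.le).symm
  · intro s hs0 hs1
    rcases lt_trichotomy s 0 with h | h | h
    · -- s < 0
      have hden : (0:ℝ) < 1 - μ * s := by nlinarith
      have hev : ltilSqHinge μ =ᶠ[nhds s] Abr μ := by
        filter_upwards [Iio_mem_nhds h] with t ht
        exact ltil_of_le μ t (le_of_lt ht)
      rw [hev.deriv_eq, (hasDerivAt_Abr μ hμ s hden.ne').deriv,
        sqloss_deriv_lt s (by linarith), abs_of_neg h]
      have : 1 + μ * (-s) = 1 - μ * s := by ring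
      rw [this]
      field_simp
    · exact absurd h hs0
    · rcases lt_trichotomy s 1 with h1 | h1 | h1
      · have hden : (0:ℝ) < 1 + μ * s := by nlinarith
        have hev : ltilSqHinge μ =ᶠ[nhds s] Bbr μ := by
          filter_upwards [Ioo_mem_nhds h h1] with t ht
          exact ltil_of_mid μ t ht.1 ht.2
        rw [hev.deriv_eq, (hasDerivAt_Bbr μ hμ s hden.ne').deriv,
          sqloss_deriv_lt s h1, abs_of_pos h]
        field_simp
      · exact absurd h1 hs1
      · have hev : ltilSqHinge μ =ᶠ[nhds s] (fun _ => (0:ℝ)) := by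
          filter_upwards [Ioi_mem_nhds h1] with t ht
          exact ltil_of_ge μ t (le_of_lt ht)
        rw [hev.deriv_eq, deriv_const, sqloss_deriv_gt s h1, mul_zero]
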